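/- arXiv:math/0607164 — 2 statements merged into one kernel-verified Lean document; each statement's English description precedes it below -/
import Mathlib

section
/- Let $\sigma$ be a convex polyhedral cone in a finite-dimensional real vector space $V$, i.e. $\sigma = \{r_1 v_1 + \cdots + r_k v_k : r_i \geq 0\}$ for finitely many vectors $v_1,\ldots,v_k \in V$. Let $\check\sigma = \{u \in V^* : \langle u, v\rangle \geq 0 \text{ for all } v \in \sigma\}$ be its dual. Then $(\check\sigma)^\vee = \sigma$, i.e. the double dual of $\sigma$ equals $\sigma$. -/
open Finset

/-- Conical Carathéodory step: any nonnegative combination supported on `s` can be rewritten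
as a nonnegative combination supported on a subset on which the vectors are linearly
independent. -/
lemma caratheodory_cone {V : Type*} [AddCommGroup V] [Module ℝ V]
    {k : ℕ} (v : Fin k → V) (x : V) :
    ∀ (s : Finset (Fin k)) (r : Fin k → ℝ), (∀ i, 0 ≤ r i) → (∀ i ∉ s, r i = 0) →
      x = ∑ i, r i • v i →
      ∃ t : Finset (Fin k), LinearIndependent ℝ (fun i : {i // i ∈ t} => v i.1) ∧
        ∃ r' : Fin k → ℝ, (∀ i, 0 ≤ r' i) ∧ (∀ i ∉ t, r' i = 0) ∧ x = ∑ i, r' i • v i := by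
  classical
  intro s
  induction s using Finset.strongInduction with
  | _ s ih =>
  intro r hr hsupp hx
  by_cases hind : LinearIndependent ℝ (fun i : {i // i ∈ s} => v i.1)
  · exact ⟨s, hind, r, hr, hsupp, hx⟩
  · obtain ⟨g, hg0, j, hgj⟩ := Fintype.not_linearIndependent_iff.mp hind
    have key : ∀ g : {i // i ∈ s} → ℝ, (∑ i, g i • v i.1) = 0 →
        ∀ j : {i // i ∈ s}, 0 < g j →
        ∃ t : Finset (Fin k), LinearIndependent ℝ (fun i : {i // i ∈ t} => v i.1) ∧
          ∃ r' : Fin k → ℝ, (∀ i, 0 ≤ r' i) ∧ (∀ i ∉ t, r' i = 0) ∧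
            x = ∑ i, r' i • v i := by
      intro g hg0 j hgj
      set c : Fin k → ℝ := fun i => if h : i ∈ s then g ⟨i, h⟩ else 0 with hc
      have hcsum : ∑ i, c i • v i = 0 := by
        rw [← Finset.sum_subset (Finset.subset_univ s)
          (by intro i _ hi; simp [hc, hi])]
        rw [← Finset.sum_attach s fun i => c i • v i]
        simpa [hc] using hg0
      have hjc : 0 < c (j : Fin k) := by
        simpa [hc, j.2] using hgj
      set T : Finset (Fin k) := s.filter (fun i => 0 < c i) with hT
      have hTne : T.Nonempty := ⟨j, by simp [hT, j.2, hjc]⟩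
      obtain ⟨i0, hi0T, hi0min⟩ := T.exists_min_image (fun i => r i / c i) hTne
      have hi0s : i0 ∈ s := (Finset.mem_filter.mp hi0T).1
      have hci0 : 0 < c i0 := (Finset.mem_filter.mp hi0T).2
      set t0 : ℝ := r i0 / c i0 with ht0
      have ht0nn : 0 ≤ t0 := div_nonneg (hr i0) hci0.le
      set r' : Fin k → ℝ := fun i => r i - t0 * c i with hr'
      have hr'nonneg : ∀ i, 0 ≤ r' i := by
        intro i
        by_cases hiT : i ∈ T
        · have hci : 0 < c i := (Finset.mem_filter.mp hiT).2
          have h1 : t0 ≤ r i / c i := hi0min i hiT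
          simp only [hr']
          nlinarith [mul_le_mul_of_nonneg_right h1 hci.le,
            div_mul_cancel₀ (r i) hci.ne']
        · by_cases his : i ∈ s
          · have : ¬ 0 < c i := by
              intro h; exact hiT (Finset.mem_filter.mpr ⟨his, h⟩)
            have hci : c i ≤ 0 := not_lt.mp this
            simp only [hr']
            nlinarith [hr i]
          · simp [hr', hc, his, hsupp i his]
      have hr'supp : ∀ i ∉ s.erase i0, r' i = 0 := by
        intro i hi
        by_cases his : i ∈ s
        · have : i = i0 := by
            by_contra hne
            exact hi (Finset.mem_erase.mpr ⟨hne, his⟩)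
          subst this
          simp [hr', ht0, div_mul_cancel₀ (r i) hci0.ne']
        · simp [hr', hc, his, hsupp i his]
      have hx' : x = ∑ i, r' i • v i := by
        have : ∑ i, r' i • v i = (∑ i, r i • v i) - t0 • ∑ i, c i • v i := by
          rw [Finset.smul_sum, ← Finset.sum_sub_distrib]
          congr 1; ext i
          simp [hr', sub_smul, smul_smul]
        rw [this, hcsum, smul_zero, sub_zero, hx]
      exact ih (s.erase i0) (Finset.erase_ssubset hi0s) r' hr'nonneg hr'supp hx'
    rcases lt_or_ge 0 (g j) with h | h
    · exact key g hg0 j h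
    · have hgj' : 0 < (-g) j := by
        simp only [Pi.neg_apply, Left.nonneg_neg_iff]
        rcases lt_or_eq_of_le h with h' | h'
        · exact neg_pos.mpr h'
        · exact absurd h' hgj
      have hg0' : ∑ i, (-g) i • v i.1 = 0 := by
        simp only [Pi.neg_apply, neg_smul, Finset.sum_neg_distrib, hg0, neg_zero]
      exact key (-g) hg0' j hgj'

/-- A finitely generated cone in a finite-dimensional real normed space is closed. -/
lemma isClosed_polyhedralCone {E : Type*} [NormedAddCommGroup E] [NormedSpace ℝ E]
    [FiniteDimensional ℝ E] {k : ℕ} (v : Fin k → E) :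
    IsClosed {x : E | ∃ r : Fin k → ℝ, (∀ i, 0 ≤ r i) ∧ x = ∑ i, r i • v i} := by
  classical
  have main : {x : E | ∃ r : Fin k → ℝ, (∀ i, 0 ≤ r i) ∧ x = ∑ i, r i • v i} =
      ⋃ t : {t : Finset (Fin k) // LinearIndependent ℝ (fun i : {i // i ∈ t} => v i.1)},
        (fun r : {i // i ∈ t.1} → ℝ => ∑ i, r i • v i.1) '' {r | ∀ i, 0 ≤ r i} := by
    ext x
    simp only [Set.mem_iUnion, Set.mem_image, Set.mem_setOf_eq]
    constructor
    · rintro ⟨r, hr, hx⟩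
      obtain ⟨t, hind, r', hr', hsupp, hx'⟩ :=
        caratheodory_cone v x Finset.univ r hr (by simp) hx
      refine ⟨⟨t, hind⟩, fun i => r' i.1, fun i => hr' i.1, ?_⟩
      rw [hx', ← Finset.sum_subset (Finset.subset_univ t)
        (by intro i _ hi; simp [hsupp i hi])]
      exact (Finset.sum_attach t fun i => r' i • v i)
    · rintro ⟨t, g, hg, hx⟩
      refine ⟨fun i => if h : i ∈ t.1 then g ⟨i, h⟩ else 0, ?_, ?_⟩
      · intro i; by_cases h : i ∈ t.1 <;> simp [h]; exact hg _
      · rw [← hx, ← Finset.sum_subset (Finset.subset_univ t.1)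
          (by intro i _ hi; simp [hi])]
        rw [← Finset.sum_attach t.1 fun i =>
          (if h : i ∈ t.1 then g ⟨i, h⟩ else 0) • v i]
        congr 1; ext i; simp [i.2]
  rw [main]
  apply isClosed_iUnion_of_finite
  rintro ⟨t, hind⟩
  set L : ({i // i ∈ t} → ℝ) →ₗ[ℝ] E :=
    { toFun := fun r => ∑ i, r i • v i.1
      map_add' := by intro a b; simp [add_smul, Finset.sum_add_distrib]
      map_smul' := by intro c a; simp [smul_smul, Finset.smul_sum] } with hL
  have hinj : Function.Injective L := by
    rw [← LinearMap.ker_eq_bot, LinearMap.ker_eq_bot']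
    intro g hg
    exact funext (Fintype.linearIndependent_iff.mp hind g hg)
  have hclosed : IsClosed {r : {i // i ∈ t} → ℝ | ∀ i, 0 ≤ r i} := by
    have : {r : {i // i ∈ t} → ℝ | ∀ i, 0 ≤ r i} = ⋂ i, {r | 0 ≤ r i} := by
      ext r; simp
    rw [this]
    exact isClosed_iInter fun i => isClosed_le continuous_const (continuous_apply i)
  exact (L.isClosedEmbedding_of_injective
    (LinearMap.ker_eq_bot.mpr hinj)).isClosedMap _ hclosed

/-- A convex polyhedral cone in a finite-dimensional real vector space equals
its double dual: `(σ̌)∨ = σ`. -/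
theorem doubleDual_of_polyhedralCone
    (V : Type*) [AddCommGroup V] [Module ℝ V] [FiniteDimensional ℝ V]
    (k : ℕ) (v : Fin k → V) (σ : Set V)
    (hσ : σ = {x : V | ∃ r : Fin k → ℝ, (∀ i, 0 ≤ r i) ∧ x = ∑ i, r i • v i}) :
    {x : V | ∀ u : Module.Dual ℝ V, (∀ y ∈ σ, 0 ≤ u y) → 0 ≤ u x} = σ := by
  classical
  set E := EuclideanSpace ℝ (Fin (Module.finrank ℝ V)) with hE
  have hfr : Module.finrank ℝ V = Module.finrank ℝ E :=
    (finrank_euclideanSpace_fin (𝕜 := ℝ)).symm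
  set e : V ≃ₗ[ℝ] E := LinearEquiv.ofFinrankEq V E hfr with he
  set w : Fin k → E := fun i => e (v i) with hw
  set K : ConvexCone ℝ E :=
    { carrier := {x : E | ∃ r : Fin k → ℝ, (∀ i, 0 ≤ r i) ∧ x = ∑ i, r i • w i}
      smul_mem' := by
        rintro c hc x ⟨r, hr, rfl⟩
        exact ⟨fun i => c * r i, fun i => mul_nonneg hc.le (hr i),
          by simp [Finset.smul_sum, smul_smul]⟩
      add_mem' := by
        rintro x ⟨r, hr, rfl⟩ y ⟨q, hq, rfl⟩
        exact ⟨r + q, fun i => add_nonneg (hr i) (hq i),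
          by simp [add_smul, Finset.sum_add_distrib]⟩ } with hK
  have hKne : (K : Set E).Nonempty := ⟨0, ⟨0, fun i => le_refl 0, by simp⟩⟩
  have hKclosed : IsClosed (K : Set E) := isClosed_polyhedralCone w
  have hdd : ∀ z : E, (∀ y : E, (∀ w ∈ (K : Set E), 0 ≤ inner ℝ w y) → 0 ≤ inner ℝ z y) →
      z ∈ (K : Set E) := by
    let C : ProperCone ℝ E :=
      ⟨K.toPointedCone (ConvexCone.Pointed.of_nonempty_of_isClosed hKne hKclosed), hKclosed⟩
    intro z hz
    by_contra hzK
    obtain ⟨y, hy, hzy⟩ := ProperCone.hyperplane_separation' C (x₀ := z) hzK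
    exact absurd (hz y (fun w hw => hy w hw)) (not_le.mpr hzy)
  have hmem : ∀ z : V, z ∈ σ ↔ e z ∈ (K : Set E) := by
    intro z
    rw [hσ]
    constructor
    · rintro ⟨r, hr, rfl⟩
      exact ⟨r, hr, by simp [hw, map_sum]⟩
    · rintro ⟨r, hr, hz⟩
      refine ⟨r, hr, e.injective ?_⟩
      rw [hz]; simp [hw, map_sum]
  ext x
  simp only [Set.mem_setOf_eq]
  constructor
  · intro h
    have hx : ∀ y : E, (∀ w ∈ (K : Set E), 0 ≤ inner ℝ w y) → 0 ≤ inner ℝ (e x) y := by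
      intro y hy
      set u : Module.Dual ℝ V := (innerₛₗ ℝ y).comp e.toLinearMap with hu
      have hunn : ∀ z ∈ σ, 0 ≤ u z := by
        intro z hz
        have hz' : e z ∈ (K : Set E) := (hmem z).mp hz
        have := hy (e z) hz'
        simpa [hu, real_inner_comm] using this
      have := h u hunn
      simpa [hu, real_inner_comm] using this
    replace hx := hdd _ hx
    exact (hmem x).mpr hx
  · intro hx u hu
    exact hu x hx
end

section
/- Define polynomials $\alpha(\delta)$ and $\beta(\Delta)$ in $T$ by mutual induction on dimension: $\alpha(\{0\}) = 1$; $\beta(\Delta) = (T^2-1)^{\dim\Delta} + \sum_{\tau \text{ proper face of }\Delta} (T^2-1)^{\dim\tau}\alpha(\mathrm{cone}^\circ_\Delta(\tau))$; $\alpha(\delta) = \mathrm{trunc}_{\leq \dim\delta - 1}((1-T^2)\beta(\mathrm{poly}(\delta)))$. Then if $\delta$ is a simplicial cone (generated by linearly independent vectors), $\alpha(\delta) = 1$. -/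
open Polynomial

/-- The cone generated by the differences `u' - u`, `u' ∈ Δ`, `u ∈ τ`. -/
def coneOfFaceSet (V : Type) [AddCommGroup V] [Module ℝ V] (Δ τ : Set V) : Set V :=
  {x | ∃ (m : ℕ) (t : Fin m → ℝ) (p q : Fin m → V),
    (∀ i, 0 ≤ t i) ∧ (∀ i, p i ∈ Δ) ∧ (∀ i, q i ∈ τ) ∧ x = ∑ i, t i • (p i - q i)}


section Aux
variable {V : Type} [AddCommGroup V] [Module ℝ V]
variable {k : ℕ} {v : Fin k → V} {c : Fin k → (V →ₗ[ℝ] ℝ)}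

lemma exists_dual_family [FiniteDimensional ℝ V] {k : ℕ} {v : Fin k → V}
    (hv : LinearIndependent ℝ v) :
    ∃ c : Fin k → (V →ₗ[ℝ] ℝ), ∀ i j, c i (v j) = if j = i then 1 else 0 := by
  classical
  set b : Module.Basis (Fin k) ℝ (Submodule.span ℝ (Set.range v)) := Module.Basis.span hv with hb
  choose g hg using fun i => LinearMap.exists_extend (b.coord i)
  refine ⟨g, fun i j => ?_⟩
  have hmem : v j ∈ Submodule.span ℝ (Set.range v) :=
    Submodule.subset_span (Set.mem_range_self j)
  have h2 : g i ((Submodule.span ℝ (Set.range v)).subtype (b j)) = b.coord i (b j) := by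
    rw [← LinearMap.comp_apply, hg i]
  have h1 : (Submodule.span ℝ (Set.range v)).subtype (b j) = v j := by
    simp [hb, Module.Basis.span_apply]
  rw [h1] at h2
  rw [h2, Module.Basis.coord_apply, Module.Basis.repr_self, Finsupp.single_apply]
/-- extract coefficients -/
lemma coeff_extract (hc : ∀ i j, c i (v j) = if j = i then 1 else 0)
    (r : Fin k → ℝ) (i : Fin k) : c i (∑ j, r j • v j) = r i := by
  classical
  rw [map_sum]
  simp only [map_smul, hc, smul_eq_mul, mul_ite, mul_one, mul_zero]
  simp

lemma span_rep (hc : ∀ i j, c i (v j) = if j = i then 1 else 0)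
    {y : V} (hy : y ∈ Submodule.span ℝ (Set.range v)) :
    ∑ j, c j y • v j = y := by
  classical
  induction hy using Submodule.span_induction with
  | mem x hx =>
      obtain ⟨j, rfl⟩ := hx
      simp only [hc]
      simp [ite_smul]
  | zero => simp
  | add x y _ _ hx hy => simp only [map_add, add_smul, Finset.sum_add_distrib, hx, hy]
  | smul a x _ hx =>
      simp only [map_smul, smul_eq_mul, mul_smul, ← Finset.smul_sum, hx]

lemma mem_delta (hc : ∀ i j, c i (v j) = if j = i then 1 else 0) (x : V) :
    x ∈ {x : V | ∃ r : Fin k → ℝ, (∀ i, 0 ≤ r i) ∧ x = ∑ i, r i • v i} ↔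
      (∀ i, 0 ≤ c i x) ∧ x = ∑ i, c i x • v i := by
  constructor
  · rintro ⟨r, hr, rfl⟩
    have : ∀ i, c i (∑ j, r j • v j) = r i := coeff_extract hc r
    constructor
    · intro i; rw [this i]; exact hr i
    · simp only [this]
  · rintro ⟨h1, h2⟩
    exact ⟨fun i => c i x, h1, h2⟩
lemma mem_Delta (hc : ∀ i j, c i (v j) = if j = i then 1 else 0) (x : V) :
    x ∈ {x ∈ {x : V | ∃ r : Fin k → ℝ, (∀ i, 0 ≤ r i) ∧ x = ∑ i, r i • v i} |
        (∑ i, c i) x = 1} ↔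
      (∀ i, 0 ≤ c i x) ∧ (∑ i, c i x) = 1 ∧ x = ∑ i, c i x • v i := by
  have hφ : (∑ i, c i) x = ∑ i, c i x := by simp
  constructor
  · rintro ⟨⟨r, hr, rfl⟩, h1⟩
    have he : ∀ i, c i (∑ j, r j • v j) = r i := coeff_extract hc r
    refine ⟨fun i => (he i).symm ▸ hr i, ?_, ?_⟩
    · rw [← hφ]; exact h1
    · simp only [he]
  · rintro ⟨h0, h1, h2⟩
    exact ⟨⟨fun i => c i x, h0, h2⟩, by rw [hφ]; exact h1⟩

lemma pos_on_cone (hc : ∀ i j, c i (v j) = if j = i then 1 else 0) :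
    ∀ x ∈ {x : V | ∃ r : Fin k → ℝ, (∀ i, 0 ≤ r i) ∧ x = ∑ i, r i • v i},
      x ≠ 0 → 0 < (∑ i, c i) x := by
  classical
  rintro x ⟨r, hr, rfl⟩ hx
  have he : ∀ i, c i (∑ j, r j • v j) = r i := coeff_extract hc r
  have hφ : (∑ i, c i) (∑ j, r j • v j) = ∑ i, r i := by
    rw [LinearMap.sum_apply]
    exact Finset.sum_congr rfl (fun i _ => he i)
  rw [hφ]
  rcases (Finset.sum_pos' (fun i _ => hr i)) with h
  by_contra hle
  push_neg at hle
  have : ∀ i, r i = 0 := by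
    intro i
    have := Finset.sum_le_sum (fun j (_ : j ∈ Finset.univ) => hr j)
    have hsum : ∑ i, r i = 0 := le_antisymm hle (Finset.sum_nonneg fun i _ => hr i)
    exact le_antisymm (by
      have := Finset.single_le_sum (fun j (_ : j ∈ Finset.univ) => hr j) (Finset.mem_univ i)
      linarith) (hr i)
  exact hx (by simp [this])

lemma cone_ne_zero (hc : ∀ i j, c i (v j) = if j = i then 1 else 0) (hk : 0 < k) :
    {x : V | ∃ r : Fin k → ℝ, (∀ i, 0 ≤ r i) ∧ x = ∑ i, r i • v i} ≠ ({0} : Set V) := by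
  classical
  intro h
  have hv0 : v ⟨0, hk⟩ ∈ {x : V | ∃ r : Fin k → ℝ, (∀ i, 0 ≤ r i) ∧ x = ∑ i, r i • v i} := by
    refine ⟨fun j => if j = ⟨0, hk⟩ then 1 else 0, fun i => by dsimp only; split <;> norm_num, ?_⟩
    simp [ite_smul]
  rw [h] at hv0
  have : c ⟨0, hk⟩ (v ⟨0, hk⟩) = 1 := by rw [hc]; simp
  rw [Set.mem_singleton_iff.mp hv0] at this
  simp at this

lemma v_mem_Delta (hc : ∀ i j, c i (v j) = if j = i then 1 else 0)
    {Δ : Set V}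
    (hΔ : ∀ x, x ∈ Δ ↔ (∀ i, 0 ≤ c i x) ∧ (∑ i, c i x) = 1 ∧ x = ∑ i, c i x • v i)
    (j : Fin k) : v j ∈ Δ := by
  classical
  rw [hΔ]
  simp only [hc]
  exact ⟨fun i => by split <;> norm_num, by simp, by simp [ite_smul]⟩

lemma Delta_polytope (hc : ∀ i j, c i (v j) = if j = i then 1 else 0) :
    {x ∈ {x : V | ∃ r : Fin k → ℝ, (∀ i, 0 ≤ r i) ∧ x = ∑ i, r i • v i} |
        (∑ i, c i) x = 1}
      = convexHull ℝ (Set.range v) := by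
  classical
  have hs : Set.range v = Set.range v := rfl
  apply Set.Subset.antisymm
  · rintro x ⟨⟨r, hr, rfl⟩, h1⟩
    have he : ∀ i, c i (∑ j, r j • v j) = r i := coeff_extract hc r
    have hsum : ∑ i, r i = 1 := by
      rw [LinearMap.sum_apply] at h1
      rw [← h1]
      exact (Finset.sum_congr rfl (fun i _ => (he i))).symm
    exact mem_convexHull_of_exists_fintype r v hr hsum
      (fun i => Set.mem_range_self i) rfl
  · intro x hx
    rw [mem_convexHull_iff_exists_fintype] at hx
    obtain ⟨ι, _, w, z, hw0, hw1, hz, hx⟩ := hx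
    choose l hl using hz
    have hcz : ∀ j i, c j (z i) = if l i = j then 1 else 0 := fun j i => by
      rw [← hl i, hc]
    
    have hcx : ∀ j, c j x = ∑ i, w i * (if l i = j then 1 else 0) := by
      intro j
      rw [← hx, map_sum]
      exact Finset.sum_congr rfl (fun i _ => by rw [map_smul, hcz, smul_eq_mul])
    refine ⟨⟨fun j => c j x, fun j => ?_, ?_⟩, ?_⟩
    · show 0 ≤ c j x
      rw [hcx]
      exact Finset.sum_nonneg fun i _ => by
        split <;> simp [hw0 i, mul_nonneg (hw0 i)]
    · have hmem : x ∈ Submodule.span ℝ (Set.range v) := by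
        rw [← hx]
        exact Submodule.sum_mem _ fun i _ => Submodule.smul_mem _ _
          (Submodule.subset_span ⟨l i, hl i⟩)
      exact (span_rep hc hmem).symm
    · rw [LinearMap.sum_apply]
      calc ∑ j, c j x = ∑ j, ∑ i, w i * (if l i = j then 1 else 0) := by
            exact Finset.sum_congr rfl fun j _ => hcx j
        _ = ∑ i, ∑ j, w i * (if l i = j then 1 else 0) := Finset.sum_comm
        _ = ∑ i, w i := by
            refine Finset.sum_congr rfl fun i _ => ?_
            simp [mul_ite]
        _ = 1 := hw1


lemma Delta_polytope' [FiniteDimensional ℝ V] (hc : ∀ i j, c i (v j) = if j = i then 1 else 0) :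
    ∃ s : Finset V,
      {x ∈ {x : V | ∃ r : Fin k → ℝ, (∀ i, 0 ≤ r i) ∧ x = ∑ i, r i • v i} |
        (∑ i, c i) x = 1} = convexHull ℝ (↑s : Set V) := by
  refine ⟨(Set.finite_range v).toFinset, ?_⟩
  rw [Set.Finite.coe_toFinset]
  exact Delta_polytope hc
lemma face_char (hc : ∀ i j, c i (v j) = if j = i then 1 else 0) (hk : 0 < k)
    {Δ : Set V}
    (hΔ : ∀ x, x ∈ Δ ↔ (∀ i, 0 ≤ c i x) ∧ (∑ i, c i x) = 1 ∧ x = ∑ i, c i x • v i) :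
    {τ : Set V | (∃ ψ : V →ₗ[ℝ] ℝ, τ = {u ∈ Δ | ∀ u' ∈ Δ, ψ u ≤ ψ u'}) ∧ τ ≠ Δ}
      = (fun S : Finset (Fin k) => {x ∈ Δ | ∀ j ∉ S, c j x = 0}) ''
          {S : Finset (Fin k) | S.Nonempty ∧ S ≠ Finset.univ} := by
  classical
  have : Nonempty (Fin k) := ⟨⟨0, hk⟩⟩
  ext τ
  constructor
  · rintro ⟨⟨ψ, rfl⟩, hne⟩
    set m := Finset.univ.inf' Finset.univ_nonempty (fun i => ψ (v i)) with hm
    set S := Finset.univ.filter (fun i => ψ (v i) = m) with hS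
    obtain ⟨i0, _, hi0⟩ := Finset.exists_mem_eq_inf' Finset.univ_nonempty (fun i => ψ (v i))
    have hi0' : m = ψ (v i0) := hm.trans hi0
    have hi0S : i0 ∈ S := by rw [hS]; simp [hi0'.symm]
    have hmle : ∀ i, m ≤ ψ (v i) := fun i => Finset.inf'_le _ (Finset.mem_univ i)
    -- key computation: for x ∈ Δ, ψ x - m = ∑ i, c i x * (ψ (v i) - m)
    have key : ∀ x ∈ Δ, ψ x - m = ∑ i, c i x * (ψ (v i) - m) := by
      intro x hx
      obtain ⟨h0, h1, h2⟩ := (hΔ x).mp hx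
      calc ψ x - m = ψ (∑ i, c i x • v i) - (∑ i, c i x) * m := by
            rw [← h2, h1, one_mul]
        _ = (∑ i, c i x * ψ (v i)) - ∑ i, c i x * m := by
            rw [map_sum, Finset.sum_mul]
            simp [smul_eq_mul]
        _ = ∑ i, c i x * (ψ (v i) - m) := by
            rw [← Finset.sum_sub_distrib]
            exact Finset.sum_congr rfl fun i _ => by ring
    have hterm : ∀ x ∈ Δ, ∀ i, 0 ≤ c i x * (ψ (v i) - m) := by
      intro x hx i
      exact mul_nonneg (((hΔ x).mp hx).1 i) (by linarith [hmle i])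
    -- argmin set equals {x ∈ Δ | ψ x = m}
    have hargmin : {u ∈ Δ | ∀ u' ∈ Δ, ψ u ≤ ψ u'} = {x ∈ Δ | ψ x = m} := by
      ext x
      constructor
      · rintro ⟨hx, hmin⟩
        refine ⟨hx, le_antisymm ?_ ?_⟩
        · rw [hi0']
          exact hmin _ (v_mem_Delta hc hΔ i0)
        · have := key x hx
          have : 0 ≤ ψ x - m := by
            rw [this]; exact Finset.sum_nonneg fun i _ => hterm x hx i
          linarith
      · rintro ⟨hx, hψx⟩
        refine ⟨hx, fun u' hu' => ?_⟩
        have h := key u' hu'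
        have : 0 ≤ ψ u' - m := by
          rw [h]; exact Finset.sum_nonneg fun i _ => hterm u' hu' i
        linarith
    -- {x ∈ Δ | ψ x = m} = τ_S
    have htau : {x ∈ Δ | ψ x = m} = {x ∈ Δ | ∀ j ∉ S, c j x = 0} := by
      ext x
      constructor
      · rintro ⟨hx, hψx⟩
        refine ⟨hx, fun j hj => ?_⟩
        have hsum0 : ∑ i, c i x * (ψ (v i) - m) = 0 := by
          rw [← key x hx, hψx]; ring
        have hall := (Finset.sum_eq_zero_iff_of_nonneg
          (fun i _ => hterm x hx i)).mp hsum0 j (Finset.mem_univ j)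
        have hjm : ψ (v j) ≠ m := by
          intro h; exact hj (by rw [hS]; simp [h])
        have : ψ (v j) - m ≠ 0 := fun h => hjm (by linarith)
        rcases mul_eq_zero.mp hall with h | h
        · exact h
        · exact absurd h this
      · rintro ⟨hx, hj0⟩
        refine ⟨hx, ?_⟩
        have : ψ x - m = 0 := by
          rw [key x hx]
          refine Finset.sum_eq_zero fun i _ => ?_
          by_cases hiS : i ∈ S
          · have : ψ (v i) = m := by
              rw [hS] at hiS; exact (Finset.mem_filter.mp hiS).2
            rw [this]; ring
          · rw [hj0 i hiS]; ring
        linarith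
    refine ⟨S, ⟨⟨i0, hi0S⟩, ?_⟩, (hargmin.trans htau).symm⟩
    -- S ≠ univ
    intro hSuniv
    apply hne
    rw [hargmin, htau, hSuniv]
    ext x
    simp
  · rintro ⟨S, ⟨⟨i0, hi0⟩, hSuniv⟩, rfl⟩
    obtain ⟨j0, hj0⟩ : ∃ j, j ∉ S := by
      by_contra h
      push_neg at h
      exact hSuniv (Finset.eq_univ_iff_forall.mpr h)
    set ψ : V →ₗ[ℝ] ℝ := ∑ j ∈ Sᶜ, c j with hψ
    have hψx : ∀ x, ψ x = ∑ j ∈ Sᶜ, c j x := fun x => by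
      rw [hψ, LinearMap.sum_apply]
    have hψv : ∀ i, i ∈ S → ψ (v i) = 0 := by
      intro i hi
      rw [hψx]
      refine Finset.sum_eq_zero fun j hj => ?_
      rw [Finset.mem_compl] at hj
      rw [hc]
      exact if_neg fun h : i = j => hj (h ▸ hi)
    have hψnn : ∀ x ∈ Δ, 0 ≤ ψ x := by
      intro x hx
      rw [hψx]
      exact Finset.sum_nonneg fun j _ => ((hΔ x).mp hx).1 j
    have hψzero : ∀ x ∈ Δ, (ψ x = 0 ↔ ∀ j ∉ S, c j x = 0) := by
      intro x hx
      rw [hψx]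
      constructor
      · intro h j hj
        exact (Finset.sum_eq_zero_iff_of_nonneg
          (fun j _ => ((hΔ x).mp hx).1 j)).mp h j (Finset.mem_compl.mpr hj)
      · intro h
        exact Finset.sum_eq_zero fun j hj => h j (Finset.mem_compl.mp hj)
    constructor
    · refine ⟨ψ, ?_⟩
      ext x
      constructor
      · rintro ⟨hx, hj⟩
        refine ⟨hx, fun u' hu' => ?_⟩
        have : ψ x = 0 := (hψzero x hx).mpr hj
        rw [this]
        exact hψnn u' hu'
      · rintro ⟨hx, hmin⟩
        refine ⟨hx, (hψzero x hx).mp (le_antisymm ?_ (hψnn x hx))⟩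
        have hv0 : ψ (v i0) = 0 := hψv i0 hi0
        rw [← hv0]
        exact hmin _ (v_mem_Delta hc hΔ i0)
    · -- τ_S ≠ Δ
      intro h
      have hD : v j0 ∈ Δ := v_mem_Delta hc hΔ j0
      rw [← h] at hD
      have := hD.2 j0 hj0
      rw [hc] at this
      simp at this
lemma v_mem_tau (hc : ∀ i j, c i (v j) = if j = i then 1 else 0)
    {Δ : Set V}
    (hΔ : ∀ x, x ∈ Δ ↔ (∀ i, 0 ≤ c i x) ∧ (∑ i, c i x) = 1 ∧ x = ∑ i, c i x • v i)
    {S : Finset (Fin k)} {i : Fin k} (hi : i ∈ S) :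
    v i ∈ {x ∈ Δ | ∀ j ∉ S, c j x = 0} := by
  refine ⟨v_mem_Delta hc hΔ i, fun j hj => ?_⟩
  rw [hc]
  exact if_neg fun h : i = j => hj (h ▸ hi)

lemma tau_injOn (hc : ∀ i j, c i (v j) = if j = i then 1 else 0)
    {Δ : Set V}
    (hΔ : ∀ x, x ∈ Δ ↔ (∀ i, 0 ≤ c i x) ∧ (∑ i, c i x) = 1 ∧ x = ∑ i, c i x • v i) :
    Set.InjOn (fun S : Finset (Fin k) => {x ∈ Δ | ∀ j ∉ S, c j x = 0})
      {S : Finset (Fin k) | S.Nonempty ∧ S ≠ Finset.univ} := by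
  have key : ∀ S S' : Finset (Fin k),
      {x ∈ Δ | ∀ j ∉ S, c j x = 0} = {x ∈ Δ | ∀ j ∉ S', c j x = 0} → S ⊆ S' := by
    intro S S' h i hi
    have hv : v i ∈ {x ∈ Δ | ∀ j ∉ S', c j x = 0} := h ▸ v_mem_tau hc hΔ hi
    by_contra hiS'
    have := hv.2 i hiS'
    rw [hc] at this
    simp at this
  intro S _ S' _ h
  exact Finset.Subset.antisymm (key S S' h) (key S' S h.symm)

lemma vectorSpan_tau (hc : ∀ i j, c i (v j) = if j = i then 1 else 0)
    {Δ : Set V}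
    (hΔ : ∀ x, x ∈ Δ ↔ (∀ i, 0 ≤ c i x) ∧ (∑ i, c i x) = 1 ∧ x = ∑ i, c i x • v i)
    {S : Finset (Fin k)} {i0 : Fin k} (hi0 : i0 ∈ S) :
    vectorSpan ℝ {x ∈ Δ | ∀ j ∉ S, c j x = 0}
      = Submodule.span ℝ ((fun i => v i - v i0) '' ↑S) := by
  classical
  apply le_antisymm
  · rw [vectorSpan_def, Submodule.span_le]
    rintro y ⟨x, hx, x', hx', rfl⟩
    have hxd := (hΔ x).mp hx.1
    have hx'd := (hΔ x').mp hx'.1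
    set d : Fin k → ℝ := fun i => c i x - c i x' with hd
    have hdsum : ∑ i, d i = 0 := by
      rw [Finset.sum_sub_distrib, hxd.2.1, hx'd.2.1]; ring
    have hxx' : x - x' = ∑ i, d i • (v i - v i0) := by
      have : ∑ i, d i • (v i - v i0) = (∑ i, d i • v i) - (∑ i, d i) • v i0 := by
        rw [Finset.sum_smul]
        rw [← Finset.sum_sub_distrib]
        exact Finset.sum_congr rfl fun i _ => smul_sub _ _ _
      rw [this, hdsum, zero_smul, sub_zero]
      rw [hd]
      simp only [sub_smul]
      rw [Finset.sum_sub_distrib, ← hxd.2.2, ← hx'd.2.2]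
    show x - x' ∈ _
    rw [hxx']
    refine Submodule.sum_mem _ fun i _ => ?_
    by_cases hiS : i ∈ S
    · exact Submodule.smul_mem _ _ (Submodule.subset_span ⟨i, hiS, rfl⟩)
    · have : d i = 0 := by rw [hd]; simp [hx.2 i hiS, hx'.2 i hiS]
      rw [this, zero_smul]
      exact Submodule.zero_mem _
  · rw [Submodule.span_le]
    rintro y ⟨i, hiS, rfl⟩
    exact vsub_mem_vectorSpan ℝ (v_mem_tau hc hΔ hiS) (v_mem_tau hc hΔ hi0)

lemma finrank_span_diff [FiniteDimensional ℝ V]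
    (hc : ∀ i j, c i (v j) = if j = i then 1 else 0)
    {S : Finset (Fin k)} {i0 : Fin k} (hi0 : i0 ∈ S) :
    Module.finrank ℝ (Submodule.span ℝ ((fun i => v i - v i0) '' ↑S)) = S.card - 1 := by
  classical
  set u : ↥(S.erase i0) → V := fun i => v ↑i - v i0 with hu
  have hindep : LinearIndependent ℝ u := by
    rw [Fintype.linearIndependent_iff]
    intro g hg j0
    have := congrArg (c ↑j0) hg
    rw [map_sum, map_zero] at this
    have hj0 : (↑j0 : Fin k) ≠ i0 := (Finset.mem_erase.mp j0.2).1
    have hterm : ∀ i : ↥(S.erase i0),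
        c ↑j0 (g i • u i) = if i = j0 then g i else 0 := by
      intro i
      have h1 : c ↑j0 (u i) = if i = j0 then 1 else 0 := by
        rw [hu]
        simp only [map_sub, hc]
        rw [if_neg (fun h : i0 = ↑j0 => hj0 h.symm), sub_zero]
        by_cases hij : i = j0
        · rw [if_pos (by rw [hij]), if_pos hij]
        · rw [if_neg (fun h : (↑i : Fin k) = ↑j0 => hij (Subtype.ext h)), if_neg hij]
      rw [map_smul, h1, smul_eq_mul]
      by_cases hij : i = j0 <;> simp [hij]
    rw [Finset.sum_congr rfl (fun i _ => hterm i)] at this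
    rw [Finset.sum_ite_eq' Finset.univ j0 (fun i => g i)] at this
    simpa using this
  have hrange : Submodule.span ℝ ((fun i => v i - v i0) '' ↑S)
      = Submodule.span ℝ (Set.range u) := by
    have h1 : ((fun i => v i - v i0) '' ↑S : Set V)
        = insert 0 ((fun i => v i - v i0) '' ↑(S.erase i0)) := by
      conv_lhs => rw [← Finset.insert_erase hi0]
      rw [Finset.coe_insert, Set.image_insert_eq, sub_self]
    rw [h1, Submodule.span_insert_zero]
    congr 1
    rw [Set.image_eq_range]
    rfl
  rw [hrange, finrank_span_eq_card hindep, Fintype.card_coe,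
    Finset.card_erase_of_mem hi0]

lemma vectorSpan_cone (hv : LinearIndependent ℝ v) :
    vectorSpan ℝ {x : V | ∃ r : Fin k → ℝ, (∀ i, 0 ≤ r i) ∧ x = ∑ i, r i • v i}
      = Submodule.span ℝ (Set.range v) := by
  classical
  apply le_antisymm
  · rw [vectorSpan_def, Submodule.span_le]
    rintro y ⟨x, ⟨r, _, rfl⟩, x', ⟨r', _, rfl⟩, rfl⟩
    have hmem : ∀ (s : Fin k → ℝ), (∑ i, s i • v i) ∈ Submodule.span ℝ (Set.range v) :=
      fun s => Submodule.sum_mem _ fun i _ =>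
        Submodule.smul_mem _ _ (Submodule.subset_span (Set.mem_range_self i))
    exact Submodule.sub_mem _ (hmem r) (hmem r')
  · rw [Submodule.span_le]
    rintro y ⟨i, rfl⟩
    have h0 : (0 : V) ∈ {x : V | ∃ r : Fin k → ℝ, (∀ i, 0 ≤ r i) ∧ x = ∑ i, r i • v i} :=
      ⟨0, fun _ => le_refl 0, by simp⟩
    have hv : v i ∈ {x : V | ∃ r : Fin k → ℝ, (∀ i, 0 ≤ r i) ∧ x = ∑ i, r i • v i} :=
      ⟨fun j => if j = i then 1 else 0, fun j => by dsimp only; split <;> norm_num,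
        by simp [ite_smul]⟩
    have := vsub_mem_vectorSpan ℝ hv h0
    simpa using this

lemma finrank_vectorSpan_cone [FiniteDimensional ℝ V] (hv : LinearIndependent ℝ v) :
    Module.finrank ℝ
      (vectorSpan ℝ {x : V | ∃ r : Fin k → ℝ, (∀ i, 0 ≤ r i) ∧ x = ∑ i, r i • v i}) = k := by
  rw [vectorSpan_cone hv, finrank_span_eq_card hv]
  simp
lemma rep_sub {p : V} {i0 : Fin k} (hone : ∑ i, c i p = 1)
    (hrep : p = ∑ i, c i p • v i) :
    p - v i0 = ∑ i, c i p • (v i - v i0) := by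
  have : ∑ i, c i p • (v i - v i0) = (∑ i, c i p • v i) - (∑ i, c i p) • v i0 := by
    rw [Finset.sum_smul, ← Finset.sum_sub_distrib]
    exact Finset.sum_congr rfl fun i _ => smul_sub _ _ _
  rw [this, hone, one_smul, ← hrep]

lemma quotient_cone (hc : ∀ i j, c i (v j) = if j = i then 1 else 0)
    {Δ : Set V}
    (hΔ : ∀ x, x ∈ Δ ↔ (∀ i, 0 ≤ c i x) ∧ (∑ i, c i x) = 1 ∧ x = ∑ i, c i x • v i)
    {S : Finset (Fin k)} {i0 : Fin k} (hi0 : i0 ∈ S)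
    (hW : vectorSpan ℝ {x ∈ Δ | ∀ j ∉ S, c j x = 0}
      = Submodule.span ℝ ((fun i => v i - v i0) '' ↑S)) :
    ∃ v' : Fin (Sᶜ.card) → (V ⧸ vectorSpan ℝ {x ∈ Δ | ∀ j ∉ S, c j x = 0}),
      LinearIndependent ℝ v' ∧
      (vectorSpan ℝ {x ∈ Δ | ∀ j ∉ S, c j x = 0}).mkQ ''
          coneOfFaceSet V Δ {x ∈ Δ | ∀ j ∉ S, c j x = 0}
        = {y | ∃ r : Fin (Sᶜ.card) → ℝ, (∀ i, 0 ≤ r i) ∧ y = ∑ i, r i • v' i} := by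
  classical
  set τ : Set V := {x ∈ Δ | ∀ j ∉ S, c j x = 0} with hτ
  set e : Fin (Sᶜ.card) ≃ ↥(Sᶜ : Finset (Fin k)) := (Sᶜ : Finset (Fin k)).equivFin.symm
    with he
  set v' : Fin (Sᶜ.card) → V ⧸ vectorSpan ℝ τ := fun l => (vectorSpan ℝ τ).mkQ (v ↑(e l) - v i0) with hv'
  -- membership facts
  have heS : ∀ l, (↑(e l) : Fin k) ∉ S := fun l => Finset.mem_compl.mp (e l).2
  have hkerW : ∀ j ∉ S, vectorSpan ℝ τ ≤ LinearMap.ker (c j) := by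
    intro j hj
    rw [hW, Submodule.span_le]
    rintro y ⟨i, hiS, rfl⟩
    simp only [SetLike.mem_coe, LinearMap.mem_ker, map_sub, hc]
    rw [if_neg (fun h : i = j => hj (h ▸ hiS)), if_neg (fun h : i0 = j => hj (h ▸ hi0))]
    ring
  have hsubW : ∀ i ∈ S, v i - v i0 ∈ vectorSpan ℝ τ := by
    intro i hiS
    rw [hW]
    exact Submodule.subset_span ⟨i, hiS, rfl⟩
  -- quotient functionals
  set c' : Fin k → (V ⧸ vectorSpan ℝ τ) →ₗ[ℝ] ℝ := fun j =>
    if hj : j ∈ S then 0 else (vectorSpan ℝ τ).liftQ (c j) (hkerW j hj) with hc'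
  have hc'mk : ∀ j ∉ S, ∀ x : V, c' j ((vectorSpan ℝ τ).mkQ x) = c j x := by
    intro j hj x
    rw [hc']
    simp only [dif_neg hj]
    rfl
  -- linear independence
  have hindep : LinearIndependent ℝ v' := by
    rw [Fintype.linearIndependent_iff]
    intro g hg l0
    have := congrArg (c' ↑(e l0)) hg
    rw [map_sum, map_zero] at this
    have hterm : ∀ l, c' ↑(e l0) (g l • v' l) = if l = l0 then g l else 0 := by
      intro l
      have h1 : c ↑(e l0) (v ↑(e l) - v i0) = if l = l0 then 1 else 0 := by
        simp only [map_sub, hc]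
        rw [if_neg (fun h : i0 = ↑(e l0) => heS l0 (h ▸ hi0)), sub_zero]
        by_cases hll : l = l0
        · rw [if_pos (by rw [hll]), if_pos hll]
        · have hne : (↑(e l) : Fin k) ≠ ↑(e l0) := fun h => hll (e.injective (Subtype.ext h))
          rw [if_neg hne, if_neg hll]
      rw [map_smul, hv']
      rw [hc'mk _ (heS l0), h1, smul_eq_mul]
      by_cases hll : l = l0 <;> simp [hll]
    rw [Finset.sum_congr rfl (fun l _ => hterm l)] at this
    rw [Finset.sum_ite_eq' Finset.univ l0 (fun l => g l)] at this
    simpa using this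
  refine ⟨v', hindep, ?_⟩
  -- image of q-part is zero
  have hqzero : ∀ q ∈ τ, (vectorSpan ℝ τ).mkQ (q - v i0) = 0 := by
    intro q hq
    rw [Submodule.mkQ_apply, Submodule.Quotient.mk_eq_zero]
    exact vsub_mem_vectorSpan ℝ hq (v_mem_tau hc hΔ hi0)
  -- image of p-part
  have hppart : ∀ p ∈ Δ, (vectorSpan ℝ τ).mkQ (p - v i0) = ∑ l, c ↑(e l) p • v' l := by
    intro p hp
    obtain ⟨h0, h1, h2⟩ := (hΔ p).mp hp
    rw [rep_sub h1 h2, map_sum]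
    have hsplit : ∀ i : Fin k, (vectorSpan ℝ τ).mkQ (c i p • (v i - v i0))
        = if i ∈ S then 0 else c i p • (vectorSpan ℝ τ).mkQ (v i - v i0) := by
      intro i
      by_cases hiS : i ∈ S
      · rw [if_pos hiS, map_smul]
        rw [Submodule.mkQ_apply, (Submodule.Quotient.mk_eq_zero _).mpr (hsubW i hiS),
          smul_zero]
      · rw [if_neg hiS, map_smul]
    rw [Finset.sum_congr rfl (fun i _ => hsplit i)]
    rw [Finset.sum_ite, Finset.sum_const_zero, zero_add]
    have : Finset.univ.filter (fun i => ¬ i ∈ S) = Sᶜ := by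
      ext i; simp [Finset.mem_compl]
    rw [this]
    rw [← Finset.sum_coe_sort (Sᶜ) (fun i => c i p • (vectorSpan ℝ τ).mkQ (v i - v i0))]
    rw [← Equiv.sum_comp e (fun i : ↥(Sᶜ : Finset (Fin k)) => c ↑i p • (vectorSpan ℝ τ).mkQ (v ↑i - v i0))]
  apply Set.Subset.antisymm
  · rintro y ⟨x, ⟨mm, t, p, q, ht, hp, hq, rfl⟩, rfl⟩
    refine ⟨fun l => ∑ i, t i * c ↑(e l) (p i), ?_, ?_⟩
    · intro l
      exact Finset.sum_nonneg fun i _ =>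
        mul_nonneg (ht i) (((hΔ (p i)).mp (hp i)).1 _)
    · rw [map_sum]
      have hterm : ∀ i, (vectorSpan ℝ τ).mkQ (t i • (p i - q i))
          = ∑ l, (t i * c ↑(e l) (p i)) • v' l := by
        intro i
        rw [map_smul]
        have : (vectorSpan ℝ τ).mkQ (p i - q i) = (vectorSpan ℝ τ).mkQ (p i - v i0) - (vectorSpan ℝ τ).mkQ (q i - v i0) := by
          rw [← map_sub]
          congr 1
          abel
        rw [this, hqzero (q i) (hq i), sub_zero, hppart (p i) (hp i),
          Finset.smul_sum]
        exact Finset.sum_congr rfl fun l _ => by rw [smul_smul]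
      rw [Finset.sum_congr rfl (fun i _ => hterm i), Finset.sum_comm]
      exact Finset.sum_congr rfl fun l _ => by rw [Finset.sum_smul]
  · rintro y ⟨r, hr, rfl⟩
    refine ⟨∑ l, r l • (v ↑(e l) - v i0), ⟨Sᶜ.card, r, fun l => v ↑(e l), fun _ => v i0,
      hr, fun l => v_mem_Delta hc hΔ _, fun _ => v_mem_tau hc hΔ hi0, rfl⟩, ?_⟩
    rw [map_sum]
    exact Finset.sum_congr rfl fun l _ => by rw [map_smul]

end Aux

lemma poly_compute (k : ℕ) (hk : 0 < k) :
    ((1 - X ^ 2) * ((X ^ 2 - 1) ^ (k - 1)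
        + ∑ S ∈ Finset.univ.filter
            (fun S : Finset (Fin k) => S.Nonempty ∧ S ≠ Finset.univ),
          ((X : ℤ[X]) ^ 2 - 1) ^ (S.card - 1))) %ₘ (X ^ k) = 1 := by
  classical
  set y : ℤ[X] := X ^ 2 - 1 with hy
  -- step 1: combine into sum over nonempty subsets
  have : Nonempty (Fin k) := ⟨⟨0, hk⟩⟩
  have huniv_mem : Finset.univ ∈ Finset.univ.filter
      (fun S : Finset (Fin k) => S.Nonempty) := by
    simp [Finset.univ_nonempty]
  have hers : Finset.univ.filter (fun S : Finset (Fin k) => S.Nonempty ∧ S ≠ Finset.univ)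
      = (Finset.univ.filter (fun S : Finset (Fin k) => S.Nonempty)).erase Finset.univ := by
    ext S
    simp [Finset.mem_erase, and_comm]
  have hcarduniv : (Finset.univ : Finset (Fin k)).card = k := by simp
  have hstep1 : (y) ^ (k - 1)
      + ∑ S ∈ Finset.univ.filter
          (fun S : Finset (Fin k) => S.Nonempty ∧ S ≠ Finset.univ), y ^ (S.card - 1)
      = ∑ S ∈ Finset.univ.filter (fun S : Finset (Fin k) => S.Nonempty), y ^ (S.card - 1) := by
    rw [hers, ← Finset.add_sum_erase _ _ huniv_mem, hcarduniv]
  rw [hstep1]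
  -- step 2: (1 - X^2) * sum = 1 - X^(2k)
  have hstep2 : (1 - X ^ 2) * ∑ S ∈ Finset.univ.filter
      (fun S : Finset (Fin k) => S.Nonempty), y ^ (S.card - 1) = 1 - X ^ (2 * k) := by
    rw [Finset.mul_sum]
    have hterm : ∀ S ∈ Finset.univ.filter (fun S : Finset (Fin k) => S.Nonempty),
        (1 - X ^ 2) * y ^ (S.card - 1) = -y ^ S.card := by
      intro S hS
      have hScard : 0 < S.card := Finset.card_pos.mpr (Finset.mem_filter.mp hS).2
      obtain ⟨n, hn⟩ : ∃ n, S.card = n + 1 := ⟨S.card - 1, by omega⟩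
      rw [hn]
      simp only [Nat.add_sub_cancel]
      rw [pow_succ, hy]
      ring
    rw [Finset.sum_congr rfl hterm]
    have hall : ∑ S : Finset (Fin k), y ^ S.card = X ^ (2 * k) := by
      have := Finset.prod_add (fun _ : Fin k => y) (fun _ : Fin k => (1 : ℤ[X])) Finset.univ
      simp only [Finset.prod_const, Finset.prod_const_one, mul_one, one_pow] at this
      rw [Finset.powerset_univ] at this
      have hy1 : y + 1 = X ^ 2 := by rw [hy]; ring
      rw [hy1] at this
      rw [← this, hcarduniv, pow_mul]
    have hsplit : ∑ S : Finset (Fin k), y ^ S.card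
        = y ^ (∅ : Finset (Fin k)).card
          + ∑ S ∈ Finset.univ.filter (fun S : Finset (Fin k) => S.Nonempty), y ^ S.card := by
      have hememp : (∅ : Finset (Fin k)) ∈ Finset.univ := Finset.mem_univ _
      rw [← Finset.add_sum_erase _ _ hememp]
      congr 1
      apply Finset.sum_congr _ (fun _ _ => rfl)
      ext S
      simp [Finset.nonempty_iff_ne_empty]
    rw [Finset.sum_neg_distrib]
    have : ∑ S ∈ Finset.univ.filter (fun S : Finset (Fin k) => S.Nonempty), y ^ S.card
        = X ^ (2 * k) - 1 := by
      have := hsplit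
      rw [hall] at this
      simp only [Finset.card_empty, pow_zero] at this
      linear_combination -this
    rw [this]
    ring
  rw [hstep2]
  -- step 3: mod
  rw [sub_modByMonic]
  rw [(modByMonic_eq_zero_iff_dvd (monic_X_pow k)).mpr (pow_dvd_pow X (by omega : k ≤ 2 * k))]
  have h1 : (1 : ℤ[X]) %ₘ X ^ k = 1 := by
    rw [modByMonic_eq_self_iff (monic_X_pow k), degree_one, degree_X_pow]
    exact_mod_cast hk
  rw [h1, sub_zero]

/-- Stanley's polynomials `α` (on cones) and `β` (on polytopes) are defined by
mutual induction:
* `α({0}) = 1`;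
* `β(Δ) = (T²-1)^{dim Δ} + ∑_{τ proper face of Δ} (T²-1)^{dim τ} α(cone°_Δ(τ))`,
  where `cone°_Δ(τ)` is the image of `cone_Δ(τ)` in `V / span(τ-τ)`;
* `α(δ) = trunc_{≤ dim δ - 1}((1-T²) β(poly(δ)))`, where `poly(δ)` is the
  intersection of `δ` with a hyperplane `{φ = 1}` positive on `δ \ {0}`.

Then for any `α`, `β` satisfying these recursions and any simplicial cone `δ`
(generated by linearly independent vectors), `α(δ) = 1`. -/
theorem alpha_simplicial_cone_eq_one
    (α β : ∀ (V : Type) [AddCommGroup V] [Module ℝ V], Set V → Polynomial ℤ)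
    (hα0 : ∀ (V : Type) [AddCommGroup V] [Module ℝ V],
      α V ({0} : Set V) = 1)
    (hβ : ∀ (V : Type) [AddCommGroup V] [Module ℝ V] [FiniteDimensional ℝ V]
      (Δ : Set V), (∃ s : Finset V, Δ = convexHull ℝ (↑s : Set V)) →
      β V Δ = (X ^ 2 - 1) ^ (Module.finrank ℝ (vectorSpan ℝ Δ))
        + ∑ᶠ τ ∈ {τ : Set V |
            (∃ φ : V →ₗ[ℝ] ℝ, τ = {u ∈ Δ | ∀ u' ∈ Δ, φ u ≤ φ u'}) ∧ τ ≠ Δ},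
          (X ^ 2 - 1) ^ (Module.finrank ℝ (vectorSpan ℝ τ)) *
            α (V ⧸ vectorSpan ℝ τ)
              ((vectorSpan ℝ τ).mkQ '' coneOfFaceSet V Δ τ))
    (hα : ∀ (V : Type) [AddCommGroup V] [Module ℝ V] [FiniteDimensional ℝ V]
      (δ : Set V),
      (∃ (k : ℕ) (v : Fin k → V),
        δ = {x | ∃ r : Fin k → ℝ, (∀ i, 0 ≤ r i) ∧ x = ∑ i, r i • v i}) →
      δ ≠ ({0} : Set V) →
      ∀ φ : V →ₗ[ℝ] ℝ, (∀ x ∈ δ, x ≠ 0 → 0 < φ x) →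
      α V δ = ((1 - X ^ 2) * β V {x ∈ δ | φ x = 1}) %ₘ
        (X ^ (Module.finrank ℝ (vectorSpan ℝ δ)))) :
    ∀ (V : Type) [AddCommGroup V] [Module ℝ V] [FiniteDimensional ℝ V]
      (δ : Set V) (k : ℕ) (v : Fin k → V), LinearIndependent ℝ v →
      δ = {x | ∃ r : Fin k → ℝ, (∀ i, 0 ≤ r i) ∧ x = ∑ i, r i • v i} →
      α V δ = 1 := by
  have main : ∀ k : ℕ, ∀ (V : Type) [AddCommGroup V] [Module ℝ V]
      [FiniteDimensional ℝ V] (δ : Set V) (v : Fin k → V), LinearIndependent ℝ v →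
      δ = {x | ∃ r : Fin k → ℝ, (∀ i, 0 ≤ r i) ∧ x = ∑ i, r i • v i} →
      α V δ = 1 := by
    intro k
    induction k using Nat.strong_induction_on with
    | _ k IH =>
    intro V _ _ _ δ v hv hδ
    classical
    rcases Nat.eq_zero_or_pos k with hk | hk
    · subst hk
      subst hδ
      have h0 : {x : V | ∃ r : Fin 0 → ℝ, (∀ i, 0 ≤ r i) ∧ x = ∑ i, r i • v i}
          = ({0} : Set V) := by
        ext x
        simp only [Set.mem_setOf_eq, Set.mem_singleton_iff]
        constructor
        · rintro ⟨r, _, rfl⟩; simp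
        · rintro rfl; exact ⟨fun i => 0, fun i => le_refl 0, by simp⟩
      rw [h0, hα0]
    · obtain ⟨c, hc⟩ := exists_dual_family hv
      subst hδ
      have hΔ := mem_Delta (v := v) hc
      -- apply the α recursion
      have hαeq := hα V _ ⟨k, v, rfl⟩ (cone_ne_zero hc hk) (∑ i, c i) (pos_on_cone hc)
      rw [finrank_vectorSpan_cone hv] at hαeq
      -- apply the β recursion
      have hβeq := hβ V {x ∈ {x : V | ∃ r : Fin k → ℝ, (∀ i, 0 ≤ r i) ∧ x = ∑ i, r i • v i} |
          (∑ i, c i) x = 1} (Delta_polytope' hc)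
      -- rewrite the face set
      rw [face_char hc hk hΔ] at hβeq
      rw [finsum_mem_image (tau_injOn hc hΔ)] at hβeq
      have hsetfin : {S : Finset (Fin k) | S.Nonempty ∧ S ≠ Finset.univ}
          = ↑(Finset.univ.filter (fun S : Finset (Fin k) => S.Nonempty ∧ S ≠ Finset.univ)) := by
        ext S; simp
      rw [hsetfin, finsum_mem_coe_finset] at hβeq
      -- compute the main dimension
      have hμ : Module.finrank ℝ
          (vectorSpan ℝ {x ∈ {x : V | ∃ r : Fin k → ℝ, (∀ i, 0 ≤ r i) ∧ x = ∑ i, r i • v i} |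
            (∑ i, c i) x = 1}) = k - 1 := by
        have htu : {x ∈ {x ∈ {x : V | ∃ r : Fin k → ℝ, (∀ i, 0 ≤ r i) ∧ x = ∑ i, r i • v i} |
            (∑ i, c i) x = 1} | ∀ j ∉ (Finset.univ : Finset (Fin k)), c j x = 0}
            = {x ∈ {x : V | ∃ r : Fin k → ℝ, (∀ i, 0 ≤ r i) ∧ x = ∑ i, r i • v i} |
            (∑ i, c i) x = 1} := by
          ext x; simp
        have hvs := vectorSpan_tau hc hΔ (Finset.mem_univ (⟨0, hk⟩ : Fin k))
        rw [htu] at hvs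
        rw [hvs, finrank_span_diff hc (Finset.mem_univ (⟨0, hk⟩ : Fin k))]
        simp
      rw [hμ] at hβeq
      -- compute each face term
      have hterm : ∀ S ∈ Finset.univ.filter
          (fun S : Finset (Fin k) => S.Nonempty ∧ S ≠ Finset.univ),
          (X ^ 2 - 1) ^ (Module.finrank ℝ
              (vectorSpan ℝ {x ∈ {x ∈ {x : V | ∃ r : Fin k → ℝ, (∀ i, 0 ≤ r i) ∧
                  x = ∑ i, r i • v i} | (∑ i, c i) x = 1} | ∀ j ∉ S, c j x = 0})) *
            α (V ⧸ vectorSpan ℝ {x ∈ {x ∈ {x : V | ∃ r : Fin k → ℝ, (∀ i, 0 ≤ r i) ∧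
                  x = ∑ i, r i • v i} | (∑ i, c i) x = 1} | ∀ j ∉ S, c j x = 0})
              ((vectorSpan ℝ {x ∈ {x ∈ {x : V | ∃ r : Fin k → ℝ, (∀ i, 0 ≤ r i) ∧
                  x = ∑ i, r i • v i} | (∑ i, c i) x = 1} | ∀ j ∉ S, c j x = 0}).mkQ ''
                coneOfFaceSet V
                  {x ∈ {x : V | ∃ r : Fin k → ℝ, (∀ i, 0 ≤ r i) ∧ x = ∑ i, r i • v i} |
                    (∑ i, c i) x = 1}
                  {x ∈ {x ∈ {x : V | ∃ r : Fin k → ℝ, (∀ i, 0 ≤ r i) ∧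
                  x = ∑ i, r i • v i} | (∑ i, c i) x = 1} | ∀ j ∉ S, c j x = 0})
          = ((X : Polynomial ℤ) ^ 2 - 1) ^ (S.card - 1) := by
        intro S hS
        obtain ⟨hSne, hSuniv⟩ := Finset.mem_filter.mp hS |>.2
        obtain ⟨i0, hi0⟩ := hSne
        have hWS := vectorSpan_tau hc hΔ hi0
        have hfr : Module.finrank ℝ
            (vectorSpan ℝ {x ∈ {x ∈ {x : V | ∃ r : Fin k → ℝ, (∀ i, 0 ≤ r i) ∧
                x = ∑ i, r i • v i} | (∑ i, c i) x = 1} | ∀ j ∉ S, c j x = 0}) = S.card - 1 := by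
          rw [hWS]
          exact finrank_span_diff hc hi0
        obtain ⟨v', hindep, himage⟩ := quotient_cone hc hΔ hi0 hWS
        have hlt : Sᶜ.card < k := by
          have h2 : 0 < S.card := Finset.card_pos.mpr ⟨i0, hi0⟩
          calc Sᶜ.card = k - S.card := by rw [Finset.card_compl, Fintype.card_fin]
            _ < k := Nat.sub_lt hk h2
        have hα1 : α (V ⧸ vectorSpan ℝ {x ∈ {x ∈ {x : V | ∃ r : Fin k → ℝ, (∀ i, 0 ≤ r i) ∧
                x = ∑ i, r i • v i} | (∑ i, c i) x = 1} | ∀ j ∉ S, c j x = 0})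
            ((vectorSpan ℝ {x ∈ {x ∈ {x : V | ∃ r : Fin k → ℝ, (∀ i, 0 ≤ r i) ∧
                x = ∑ i, r i • v i} | (∑ i, c i) x = 1} | ∀ j ∉ S, c j x = 0}).mkQ ''
              coneOfFaceSet V
                {x ∈ {x : V | ∃ r : Fin k → ℝ, (∀ i, 0 ≤ r i) ∧ x = ∑ i, r i • v i} |
                  (∑ i, c i) x = 1}
                {x ∈ {x ∈ {x : V | ∃ r : Fin k → ℝ, (∀ i, 0 ≤ r i) ∧
                x = ∑ i, r i • v i} | (∑ i, c i) x = 1} | ∀ j ∉ S, c j x = 0}) = 1 := by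
          rw [himage]
          exact IH Sᶜ.card hlt _ _ v' hindep rfl
        rw [hfr, hα1, mul_one]
      rw [Finset.sum_congr rfl hterm] at hβeq
      rw [hαeq, hβeq]
      exact poly_compute k hk
  intro V _ _ _ δ k v hv hδ
  exact main k V δ v hv hδ
end
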